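/- Let G = (V,E) be a connected bipartite graph on n vertices and let M be a generalized Laplacian of G. Let λ_n be the largest eigenvalue of M and f_n an eigenvector of M corresponding to λ_n. Then λ_n is a simple eigenvalue and 𝔚(f_n) = 𝔖(f_n) = n, where the nodal domains are taken with respect to the all-positive signature σ ≡ +1 on G. -/

import Mathlib

open Matrix Polynomial

section NodalDefs

variable {V : Type*}

/-- The product of the signature over consecutive pairs of a list of vertices. -/
noncomputable def chainSign (σ : V → V → ℝ) (l : List V) : ℝ :=
  ((l.zip l.tail).map fun p => σ p.1 p.2).prod

/-- One step of a strong nodal domain walk. -/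
def SWalkStep (G : SimpleGraph V) (σ : V → V → ℝ) (f : V → ℝ) (u v : V) : Prop :=
  G.Adj u v ∧ 0 < f u * σ u v * f v

/-- `x` and `y` are connected by a strong nodal domain walk (S-walk). -/
def SConn (G : SimpleGraph V) (σ : V → V → ℝ) (f : V → ℝ) (x y : V) : Prop :=
  ∃ l : List V, 2 ≤ l.length ∧ l.Chain' (SWalkStep G σ f) ∧
    l.head? = some x ∧ l.getLast? = some y

/-- The strong nodal domain (as a vertex set) containing the non-zero `w`. -/
def strongClass (G : SimpleGraph V) (σ : V → V → ℝ) (f : V → ℝ) (w : V) : Set V :=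
  {x | f x ≠ 0 ∧ (x = w ∨ SConn G σ f x w)}

/-- The set of strong nodal domains (as vertex sets) of `f`. -/
def strongDomains (G : SimpleGraph V) (σ : V → V → ℝ) (f : V → ℝ) : Set (Set V) :=
  {D | ∃ w, f w ≠ 0 ∧ D = strongClass G σ f w}

/-- 𝔖(f): the number of strong nodal domains of `f`. -/
noncomputable def numStrong (G : SimpleGraph V) (σ : V → V → ℝ) (f : V → ℝ) : ℕ :=
  Nat.card (strongDomains G σ f)

/-- A list of vertices is a weak nodal domain walk (W-walk). -/
def IsWWalk (G : SimpleGraph V) (σ : V → V → ℝ) (f : V → ℝ) (l : List V) : Prop :=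
  2 ≤ l.length ∧ l.Chain' G.Adj ∧
    ∀ i j : Fin l.length, i < j → f (l.get i) ≠ 0 → f (l.get j) ≠ 0 →
      (∀ k : Fin l.length, i < k → k < j → f (l.get k) = 0) →
      0 < f (l.get i) * chainSign σ ((l.drop i.val).take (j.val - i.val + 1)) * f (l.get j)

/-- `x` and `y` are connected by a weak nodal domain walk (W-walk). -/
def WConn (G : SimpleGraph V) (σ : V → V → ℝ) (f : V → ℝ) (x y : V) : Prop :=
  ∃ l : List V, IsWWalk G σ f l ∧ l.head? = some x ∧ l.getLast? = some y

/-- The weak nodal domain (as a vertex set) associated with the class of the non-zero `w`: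
the class `W` of `w` together with all vertices having a W-walk to some vertex of `W`. -/
def weakClass (G : SimpleGraph V) (σ : V → V → ℝ) (f : V → ℝ) (w : V) : Set V :=
  {x | (f x ≠ 0 ∧ (x = w ∨ WConn G σ f x w)) ∨
       ∃ u, f u ≠ 0 ∧ (u = w ∨ WConn G σ f u w) ∧ WConn G σ f x u}

/-- The set of weak nodal domains (as vertex sets) of `f`. -/
def weakDomains (G : SimpleGraph V) (σ : V → V → ℝ) (f : V → ℝ) : Set (Set V) :=
  {D | ∃ w, f w ≠ 0 ∧ D = weakClass G σ f w}

/-- 𝔚(f): the number of weak nodal domains of `f`. -/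
noncomputable def numWeak (G : SimpleGraph V) (σ : V → V → ℝ) (f : V → ℝ) : ℕ :=
  Nat.card (weakDomains G σ f)

/-- `σ` is a valid signature on `G`: symmetric and ±1-valued on edges. -/
def IsSignature (G : SimpleGraph V) (σ : V → V → ℝ) : Prop :=
  (∀ x y, σ x y = σ y x) ∧ ∀ x y, G.Adj x y → σ x y = 1 ∨ σ x y = -1

/-- `M` is compatible with the signed graph `(G, σ)`: `(G, σ)` is the induced
signed graph of `M`. -/
def Compatible (M : Matrix V V ℝ) (G : SimpleGraph V) (σ : V → V → ℝ) : Prop :=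
  (∀ x y, G.Adj x y ↔ x ≠ y ∧ M x y ≠ 0) ∧
  (∀ x y, G.Adj x y → σ x y = -(M x y / |M x y|))

/-- A signed graph is balanced if every cycle has positive sign. -/
def IsBalanced (G : SimpleGraph V) (σ : V → V → ℝ) : Prop :=
  ∀ (x : V) (p : G.Walk x x), p.IsCycle → chainSign σ p.support = 1

/-- A signed graph is antibalanced if its negation is balanced. -/
def IsAntibalanced (G : SimpleGraph V) (σ : V → V → ℝ) : Prop :=
  IsBalanced G (fun x y => -(σ x y))

/-- ℓ(G) = |E| - |V| + c(G), the cyclomatic number of `G`. -/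
noncomputable def cyclomatic (G : SimpleGraph V) : ℕ :=
  Nat.card G.edgeSet + Nat.card G.ConnectedComponent - Nat.card V

/-- The subgraph of `G` on the edges `{x,y}` with `f x * σ x y * f y > 0`. -/
def posSubgraph (G : SimpleGraph V) (σ : V → V → ℝ) (f : V → ℝ) : SimpleGraph V where
  Adj x y := G.Adj x y ∧ 0 < f x * σ x y * f y ∧ 0 < f y * σ y x * f x
  symm := ⟨fun _ _ h => ⟨h.1.symm, h.2.2, h.2.1⟩⟩
  loopless := ⟨fun x h => G.loopless.irrefl x h.1⟩

/-- `x` is tree-like: removing `x` and its incident edges increases the number of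
connected components by `d_x - 1`. -/
def IsTreeLike (G : SimpleGraph V) (x : V) : Prop :=
  Nat.card (SimpleGraph.induce {y | y ≠ x} G).ConnectedComponent + 1
    = Nat.card G.ConnectedComponent + Nat.card (G.neighborSet x)

/-- The Fiedler zero set of `f` on `G`. -/
def fiedlerZeroSet (G : SimpleGraph V) (f : V → ℝ) : Set V :=
  {x | f x = 0 ∧ ((∀ y, G.Adj x y → f y = 0) ∨ ¬ IsTreeLike G x)}

end NodalDefs


section Aux

section Comb


variable {V : Type*} {G : SimpleGraph V} {f : V → ℝ}

lemma no_SConn (hneg : ∀ x y, G.Adj x y → f x * f y < 0) (x y : V) :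
    ¬ SConn G (fun _ _ => (1:ℝ)) f x y := by
  rintro ⟨l, hlen, hchain, -, -⟩
  match l, hlen with
  | a :: b :: t, _ =>
    simp only [List.Chain', List.isChain_cons_cons] at hchain
    obtain ⟨⟨hadj, hpos⟩, -⟩ := hchain
    have := hneg a b hadj
    simp only [mul_one] at hpos
    linarith

lemma no_WConn (hneg : ∀ x y, G.Adj x y → f x * f y < 0) (hfz : ∀ x, f x ≠ 0) (x y : V) :
    ¬ WConn G (fun _ _ => (1:ℝ)) f x y := by
  rintro ⟨l, ⟨hlen, hchain, hcond⟩, -, -⟩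
  match l, hlen, hchain, hcond with
  | a :: b :: t, _, hchain, hcond =>
    simp only [List.Chain', List.isChain_cons_cons] at hchain
    have hadj := hchain.1
    have h2 : 2 ≤ (a :: b :: t).length := by simp
    have := hcond ⟨0, by simp⟩ ⟨1, by simp⟩ (by simp) (hfz _) (hfz _)
      (fun k hk1 hk2 => by
        exfalso
        have : (0:ℕ) < k.val := hk1
        have : k.val < 1 := hk2
        omega)
    simp only [List.get_eq_getElem] at this
    have hsign : chainSign (fun _ _ => (1:ℝ))
        ((((a :: b :: t)).drop 0).take (1 - 0 + 1)) = 1 := by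
      simp [chainSign]
    rw [hsign] at this
    simp only [List.getElem_cons_zero, List.getElem_cons_succ, mul_one] at this
    have := hneg a b hadj
    linarith

lemma strongClass_eq (hneg : ∀ x y, G.Adj x y → f x * f y < 0) (hfz : ∀ x, f x ≠ 0) (w : V) :
    strongClass G (fun _ _ => (1:ℝ)) f w = {w} := by
  ext x
  simp only [strongClass, Set.mem_setOf_eq, Set.mem_singleton_iff]
  constructor
  · rintro ⟨-, h | h⟩
    · exact h
    · exact absurd h (no_SConn hneg x w)
  · rintro rfl; exact ⟨hfz x, Or.inl rfl⟩

lemma weakClass_eq (hneg : ∀ x y, G.Adj x y → f x * f y < 0) (hfz : ∀ x, f x ≠ 0) (w : V) :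
    weakClass G (fun _ _ => (1:ℝ)) f w = {w} := by
  ext x
  simp only [weakClass, Set.mem_setOf_eq, Set.mem_singleton_iff]
  constructor
  · rintro (⟨-, h | h⟩ | ⟨u, -, -, h⟩)
    · exact h
    · exact absurd h (no_WConn hneg hfz x w)
    · exact absurd h (no_WConn hneg hfz x u)
  · rintro rfl; exact Or.inl ⟨hfz x, Or.inl rfl⟩

lemma numStrong_eq (hneg : ∀ x y, G.Adj x y → f x * f y < 0) (hfz : ∀ x, f x ≠ 0) :
    numStrong G (fun _ _ => (1:ℝ)) f = Nat.card V := by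
  have : strongDomains G (fun _ _ => (1:ℝ)) f = Set.range (fun w : V => ({w} : Set V)) := by
    ext D
    simp only [strongDomains, Set.mem_setOf_eq, Set.mem_range]
    constructor
    · rintro ⟨w, -, rfl⟩; exact ⟨w, (strongClass_eq hneg hfz w).symm⟩
    · rintro ⟨w, rfl⟩; exact ⟨w, hfz w, (strongClass_eq hneg hfz w).symm⟩
  rw [numStrong, this, Nat.card_range_of_injective (fun a b h => by
    simpa [Set.singleton_eq_singleton_iff] using h)]

lemma numWeak_eq (hneg : ∀ x y, G.Adj x y → f x * f y < 0) (hfz : ∀ x, f x ≠ 0) :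
    numWeak G (fun _ _ => (1:ℝ)) f = Nat.card V := by
  have : weakDomains G (fun _ _ => (1:ℝ)) f = Set.range (fun w : V => ({w} : Set V)) := by
    ext D
    simp only [weakDomains, Set.mem_setOf_eq, Set.mem_range]
    constructor
    · rintro ⟨w, -, rfl⟩; exact ⟨w, (weakClass_eq hneg hfz w).symm⟩
    · rintro ⟨w, rfl⟩; exact ⟨w, hfz w, (weakClass_eq hneg hfz w).symm⟩
  rw [numWeak, this, Nat.card_range_of_injective (fun a b h => by
    simpa [Set.singleton_eq_singleton_iff] using h)]


end Comb

variable {n : ℕ}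

section Quad


variable {N : Matrix (Fin n) (Fin n) ℝ} (hN : N.IsHermitian) {lam : ℝ}

-- real spectral theorem, with ofReal = id
lemma real_spectral (hN : N.IsHermitian) :
    N = (hN.eigenvectorUnitary : Matrix (Fin n) (Fin n) ℝ) * diagonal hN.eigenvalues
      * star (hN.eigenvectorUnitary : Matrix (Fin n) (Fin n) ℝ) := by
  have := hN.spectral_theorem
  rwa [RCLike.ofReal_real_eq_id, Function.id_comp] at this

lemma quad_eq (hN : N.IsHermitian) (x : Fin n → ℝ) :
    x ⬝ᵥ (N *ᵥ x) = ∑ i, hN.eigenvalues i *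
      ((star (hN.eigenvectorUnitary : Matrix (Fin n) (Fin n) ℝ) *ᵥ x) i)^2 := by
  set U : Matrix (Fin n) (Fin n) ℝ := (hN.eigenvectorUnitary : Matrix (Fin n) (Fin n) ℝ)
  set y := star U *ᵥ x with hy
  have hstar : star U = Uᵀ := by
    rw [Matrix.star_eq_conjTranspose, conjTranspose_eq_transpose_of_trivial]
  calc x ⬝ᵥ (N *ᵥ x)
      = x ⬝ᵥ (U *ᵥ (diagonal hN.eigenvalues *ᵥ y)) := by
        rw [hy, mulVec_mulVec, mulVec_mulVec, ← real_spectral hN]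
    _ = y ⬝ᵥ (diagonal hN.eigenvalues *ᵥ y) := by
        rw [Matrix.dotProduct_mulVec x U, hy, hstar, Matrix.mulVec_transpose]
    _ = ∑ i, hN.eigenvalues i * (y i)^2 := by
        simp only [dotProduct, mulVec_diagonal]
        exact Finset.sum_congr rfl fun i _ => by ring

lemma norm_eq (hN : N.IsHermitian) (x : Fin n → ℝ) :
    x ⬝ᵥ x = ∑ i, ((star (hN.eigenvectorUnitary : Matrix (Fin n) (Fin n) ℝ) *ᵥ x) i)^2 := by
  set U : Matrix (Fin n) (Fin n) ℝ := (hN.eigenvectorUnitary : Matrix (Fin n) (Fin n) ℝ)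
  set y := star U *ᵥ x with hy
  have hstar : star U = Uᵀ := by
    rw [Matrix.star_eq_conjTranspose, conjTranspose_eq_transpose_of_trivial]
  have h1 : U * star U = 1 := (Matrix.mem_unitaryGroup_iff).mp hN.eigenvectorUnitary.2
  calc x ⬝ᵥ x = x ⬝ᵥ ((U * star U) *ᵥ x) := by rw [h1, one_mulVec]
    _ = x ⬝ᵥ (U *ᵥ y) := by rw [hy, mulVec_mulVec]
    _ = y ⬝ᵥ y := by rw [Matrix.dotProduct_mulVec x U, hy, hstar, Matrix.mulVec_transpose]
    _ = ∑ i, (y i)^2 := by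
        simp only [dotProduct]
        exact Finset.sum_congr rfl fun i _ => by ring

lemma quad_le (hN : N.IsHermitian) (hev : ∀ i, hN.eigenvalues i ≤ lam) (x : Fin n → ℝ) :
    x ⬝ᵥ (N *ᵥ x) ≤ lam * (x ⬝ᵥ x) := by
  rw [quad_eq hN, norm_eq hN, Finset.mul_sum]
  exact Finset.sum_le_sum fun i _ =>
    mul_le_mul_of_nonneg_right (hev i) (sq_nonneg _)

lemma eigen_of_quad_eq (hN : N.IsHermitian) (hev : ∀ i, hN.eigenvalues i ≤ lam)
    (x : Fin n → ℝ) (heq : x ⬝ᵥ (N *ᵥ x) = lam * (x ⬝ᵥ x)) :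
    N *ᵥ x = lam • x := by
  set U : Matrix (Fin n) (Fin n) ℝ := (hN.eigenvectorUnitary : Matrix (Fin n) (Fin n) ℝ)
  set y := star U *ᵥ x with hy
  have h1 : U * star U = 1 := (Matrix.mem_unitaryGroup_iff).mp hN.eigenvectorUnitary.2
  have hsum : ∑ i, (lam - hN.eigenvalues i) * (y i)^2 = 0 := by
    have := quad_eq hN x
    have := norm_eq hN x
    simp only [sub_mul, Finset.sum_sub_distrib, ← Finset.mul_sum]
    rw [← norm_eq hN x, ← quad_eq hN x, heq]
    ring
  have hall : ∀ i ∈ Finset.univ, (lam - hN.eigenvalues i) * (y i)^2 = 0 := by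
    rw [← Finset.sum_eq_zero_iff_of_nonneg]
    · exact hsum
    · exact fun i _ => mul_nonneg (by linarith [hev i]) (sq_nonneg _)
  have hDy : diagonal hN.eigenvalues *ᵥ y = lam • y := by
    funext i
    have := hall i (Finset.mem_univ i)
    rcases mul_eq_zero.mp this with h | h
    · simp only [mulVec_diagonal, Pi.smul_apply, smul_eq_mul]
      have : hN.eigenvalues i = lam := by linarith
      rw [this]
    · have : y i = 0 := by
        have := sq_eq_zero_iff.mp h; exact this
      simp [mulVec_diagonal, this]
  calc N *ᵥ x = U *ᵥ (diagonal hN.eigenvalues *ᵥ y) := by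
        rw [hy, mulVec_mulVec, mulVec_mulVec, ← real_spectral hN]
    _ = U *ᵥ (lam • y) := by rw [hDy]
    _ = lam • (U *ᵥ y) := by rw [mulVec_smul]
    _ = lam • x := by rw [hy, mulVec_mulVec, h1, one_mulVec]


end Quad

section PF
variable {N : Matrix (Fin n) (Fin n) ℝ} {lam : ℝ} {G : SimpleGraph (Fin n)}
lemma top_eigenvector (hN : N.IsHermitian) (hev : ∀ i, hN.eigenvalues i ≤ lam)
    (hpos : ∀ i j, G.Adj i j → 0 < N i j)
    (hzero : ∀ i j, i ≠ j → ¬G.Adj i j → N i j = 0)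
    (hconn : G.Connected)
    (g : Fin n → ℝ) (hg : g ≠ 0) (heig : N *ᵥ g = lam • g) :
    (∀ x, g x ≠ 0) ∧ (∀ x y, G.Adj x y → 0 < g x * g y) := by
  set a : Fin n → ℝ := fun i => |g i| with ha
  have haa : a ⬝ᵥ a = g ⬝ᵥ g := by
    simp only [dotProduct, ha]
    exact Finset.sum_congr rfl fun i _ => by rw [abs_mul_abs_self]
  have hNij : ∀ i j, i ≠ j → 0 ≤ N i j := by
    intro i j hij
    by_cases h : G.Adj i j
    · exact (hpos i j h).le
    · rw [hzero i j hij h]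
  -- termwise comparison of quadratic forms
  have hterm : ∀ p : Fin n × Fin n, g p.1 * (N p.1 p.2 * g p.2) ≤ a p.1 * (N p.1 p.2 * a p.2) := by
    rintro ⟨i, j⟩
    by_cases hij : i = j
    · subst hij
      simp only [ha]
      rw [show |g i| * (N i i * |g i|) = N i i * (|g i| * |g i|) by ring, abs_mul_abs_self]
      ring_nf
      exact le_refl _
    · have h1 : g i * g j ≤ a i * a j := by
        rw [ha]; calc g i * g j ≤ |g i * g j| := le_abs_self _
          _ = |g i| * |g j| := abs_mul _ _
      calc g i * (N i j * g j) = N i j * (g i * g j) := by ring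
        _ ≤ N i j * (a i * a j) := mul_le_mul_of_nonneg_left h1 (hNij i j hij)
        _ = a i * (N i j * a j) := by ring
  have hquad_expand : ∀ x : Fin n → ℝ,
      x ⬝ᵥ (N *ᵥ x) = ∑ p : Fin n × Fin n, x p.1 * (N p.1 p.2 * x p.2) := by
    intro x
    rw [Fintype.sum_prod_type]
    simp only [dotProduct, mulVec, dotProduct, Finset.mul_sum]
  have hquadg : g ⬝ᵥ (N *ᵥ g) = lam * (g ⬝ᵥ g) := by
    rw [heig]; simp [dotProduct, Finset.mul_sum]
    exact Finset.sum_congr rfl fun i _ => by ring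
  have hle1 : g ⬝ᵥ (N *ᵥ g) ≤ a ⬝ᵥ (N *ᵥ a) := by
    rw [hquad_expand, hquad_expand]
    exact Finset.sum_le_sum fun p _ => hterm p
  have hle2 : a ⬝ᵥ (N *ᵥ a) ≤ lam * (a ⬝ᵥ a) := quad_le hN hev a
  have heqa : a ⬝ᵥ (N *ᵥ a) = lam * (a ⬝ᵥ a) := by
    rw [haa]; rw [haa] at hle2; linarith
  have heiga : N *ᵥ a = lam • a := eigen_of_quad_eq hN hev a heqa
  -- nowhere zero
  have hstep : ∀ x y, G.Adj x y → a x = 0 → a y = 0 := by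
    intro x y hadj hx
    have hNa : (N *ᵥ a) x = 0 := by rw [heiga]; simp [hx]
    have hsum : ∑ j, N x j * a j = 0 := by
      rw [← hNa]; rfl
    have hnn : ∀ j ∈ Finset.univ, 0 ≤ N x j * a j := by
      intro j _
      by_cases hj : x = j
      · subst hj; rw [hx]; simp
      · exact mul_nonneg (hNij x j hj) (abs_nonneg _)
    have := (Finset.sum_eq_zero_iff_of_nonneg hnn).mp hsum y (Finset.mem_univ y)
    rcases mul_eq_zero.mp this with h | h
    · exact absurd h (ne_of_gt (hpos x y hadj))
    · exact h
  have hwalk : ∀ x y : Fin n, (p : G.Walk x y) → a x = 0 → a y = 0 := by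
    intro x y p
    induction p with
    | nil => exact id
    | cons h p ih => intro hx; exact ih (hstep _ _ h hx)
  have hnz : ∀ x, g x ≠ 0 := by
    by_contra hc
    push_neg at hc
    obtain ⟨x, hx⟩ := hc
    have hax : a x = 0 := by rw [ha]; simpa using hx
    have : ∀ y, g y = 0 := by
      intro y
      have := hwalk x y (hconn.preconnected x y).some hax
      simpa [ha] using this
    exact hg (funext this)
  refine ⟨hnz, ?_⟩
  -- termwise equality
  have hsumeq : ∑ p : Fin n × Fin n, g p.1 * (N p.1 p.2 * g p.2)
      = ∑ p : Fin n × Fin n, a p.1 * (N p.1 p.2 * a p.2) := by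
    rw [← hquad_expand, ← hquad_expand, hquadg, heqa, haa]
  have hteq := (Finset.sum_eq_sum_iff_of_le (fun p _ => hterm p)).mp hsumeq
  intro x y hadj
  have := hteq (x, y) (Finset.mem_univ _)
  have h1 : N x y * (g x * g y) = N x y * (a x * a y) := by
    have e1 : g x * (N x y * g y) = N x y * (g x * g y) := by ring
    have e2 : a x * (N x y * a y) = N x y * (a x * a y) := by ring
    rw [← e1, ← e2, this]
  have h2 : g x * g y = a x * a y :=
    mul_left_cancel₀ (ne_of_gt (hpos x y hadj)) h1
  rw [h2, ha]
  exact mul_pos (abs_pos.mpr (hnz x)) (abs_pos.mpr (hnz y))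


end PF



lemma charpoly_conj (A U W : Matrix (Fin n) (Fin n) ℝ) (hUW : U * W = 1) :
    (U * A * W).charpoly = A.charpoly := by
  let Cm : Matrix (Fin n) (Fin n) ℝ →+* Matrix (Fin n) (Fin n) ℝ[X] :=
    (Polynomial.C : ℝ →+* ℝ[X]).mapMatrix
  have hscalar : ∀ B : Matrix (Fin n) (Fin n) ℝ[X],
      Matrix.scalar (Fin n) (X : ℝ[X]) * B = B * Matrix.scalar (Fin n) (X : ℝ[X]) :=
    fun B => (Matrix.scalar_commute (X : ℝ[X]) (fun r => Commute.all _ _) B).eq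
  have key : charmatrix (U * A * W) = Cm U * charmatrix A * Cm W := by
    unfold charmatrix
    have : ((C : ℝ →+* ℝ[X]).mapMatrix (U * A * W) : Matrix (Fin n) (Fin n) ℝ[X])
        = Cm U * (C : ℝ →+* ℝ[X]).mapMatrix A * Cm W := by
      simp only [Cm, _root_.map_mul]
    rw [this, Matrix.mul_sub, Matrix.sub_mul]
    congr 1
    rw [← hscalar (Cm U), Matrix.mul_assoc, ← _root_.map_mul Cm, hUW, _root_.map_one Cm,
      Matrix.mul_one]
  have hdet : (Cm U).det * (Cm W).det = 1 := by
    rw [← Matrix.det_mul, ← _root_.map_mul Cm, hUW, _root_.map_one Cm, Matrix.det_one]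
  unfold Matrix.charpoly
  rw [key, Matrix.det_mul, Matrix.det_mul]
  ring_nf
  rw [mul_comm ((Cm U).det), mul_assoc, hdet, mul_one]

lemma real_spectral' {N : Matrix (Fin n) (Fin n) ℝ} (hN : N.IsHermitian) :
    N = (hN.eigenvectorUnitary : Matrix (Fin n) (Fin n) ℝ) * diagonal hN.eigenvalues
      * star (hN.eigenvectorUnitary : Matrix (Fin n) (Fin n) ℝ) := by
  have := hN.spectral_theorem
  rwa [RCLike.ofReal_real_eq_id, Function.id_comp] at this

lemma charpoly_hermitian {N : Matrix (Fin n) (Fin n) ℝ} (hN : N.IsHermitian) :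
    N.charpoly = ∏ i, (X - C (hN.eigenvalues i)) := by
  conv_lhs => rw [real_spectral' hN]
  rw [charpoly_conj _ _ _ ((Matrix.mem_unitaryGroup_iff).mp hN.eigenvectorUnitary.2)]
  rw [Matrix.charpoly_of_upperTriangular _ (Matrix.blockTriangular_diagonal _)]
  exact Finset.prod_congr rfl fun i _ => by rw [Matrix.diagonal_apply_eq]

lemma multiset_map_eq {μ ev : Fin n → ℝ}
    (h : (∏ i, (X - C (μ i)) : ℝ[X]) = ∏ i, (X - C (ev i))) :
    Finset.univ.val.map μ = Finset.univ.val.map ev := by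
  have h1 : ∀ g : Fin n → ℝ, (∏ i, (X - C (g i)) : ℝ[X])
      = ((Finset.univ.val.map g).map fun a => X - C a).prod := by
    intro g
    rw [Multiset.map_map]
    rfl
  have := congrArg Polynomial.roots h
  rwa [h1 μ, h1 ev, Polynomial.roots_multiset_prod_X_sub_C,
    Polynomial.roots_multiset_prod_X_sub_C] at this


lemma eigen_unique {N : Matrix (Fin n) (Fin n) ℝ} {lam : ℝ} {G : SimpleGraph (Fin n)}
    (hn : 0 < n)
    (hN : N.IsHermitian) (hev : ∀ i, hN.eigenvalues i ≤ lam)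
    (hpos : ∀ i j, G.Adj i j → 0 < N i j)
    (hzero : ∀ i j, i ≠ j → ¬G.Adj i j → N i j = 0)
    (hconn : G.Connected) :
    ∀ i j, hN.eigenvalues i = lam → hN.eigenvalues j = lam → i = j := by
  set U : Matrix (Fin n) (Fin n) ℝ := (hN.eigenvectorUnitary : Matrix (Fin n) (Fin n) ℝ) with hU
  set b : Fin n → Fin n → ℝ := fun k m => U m k with hb
  have hbeig : ∀ k, N *ᵥ b k = hN.eigenvalues k • b k := by
    intro k
    have h1 : b k = ⇑(hN.eigenvectorBasis k) := by
      funext m; rw [hb]; exact hN.eigenvectorUnitary_apply m k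
    rw [h1]
    exact hN.mulVec_eigenvectorBasis k
  have horth : ∀ i j, (b i) ⬝ᵥ (b j) = if i = j then (1:ℝ) else 0 := by
    intro i j
    have h1 : star U * U = 1 := (Matrix.mem_unitaryGroup_iff').mp hN.eigenvectorUnitary.2
    have h2 := congrFun (congrFun h1 i) j
    have hstar : star U = Uᵀ := by
      rw [Matrix.star_eq_conjTranspose, conjTranspose_eq_transpose_of_trivial]
    rw [hstar] at h2
    simp only [Matrix.mul_apply, Matrix.transpose_apply, Matrix.one_apply] at h2
    simpa [dotProduct, hb] using h2
  intro i j hi hj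
  by_contra hne
  have hbne : ∀ k, b k ≠ 0 := by
    intro k hk
    have := horth k k
    rw [hk] at this
    simp [dotProduct] at this
  have hb1 := (top_eigenvector hN hev hpos hzero hconn (b i) (hbne i)
    (by rw [hbeig i, hi])).1
  have hb2 := (top_eigenvector hN hev hpos hzero hconn (b j) (hbne j)
    (by rw [hbeig j, hj])).1
  set z : Fin n := ⟨0, hn⟩ with hz
  set h : Fin n → ℝ := b j z • b i - b i z • b j with hh
  have hheig : N *ᵥ h = lam • h := by
    rw [hh, Matrix.mulVec_sub, Matrix.mulVec_smul, Matrix.mulVec_smul, hbeig i, hbeig j,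
      hi, hj, smul_sub, smul_comm (b j z) lam, smul_comm (b i z) lam]
  have hhz : h z = 0 := by simp [hh]; ring
  have hzero' : h = 0 := by
    by_contra hh0
    exact (top_eigenvector hN hev hpos hzero hconn h hh0 hheig).1 z hhz
  -- dot with b j
  have hdot : (b j) ⬝ᵥ h = - b i z := by
    rw [hh]
    rw [dotProduct_sub, dotProduct_smul, dotProduct_smul,
      horth j i, horth j j]
    simp [if_neg (Ne.symm hne)]
  rw [hzero'] at hdot
  simp [dotProduct_zero] at hdot
  exact hb1 z hdot


end Aux

/-- Roth: for a generalized Laplacian of a connected bipartite graph, the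
largest eigenvalue is simple and 𝔚(f_n) = 𝔖(f_n) = n. -/
theorem stmt_5 (n : ℕ) (hn : 0 < n) (G : SimpleGraph (Fin n))
    (hconn : G.Connected) (hbip : G.Colorable 2)
    (M : Matrix (Fin n) (Fin n) ℝ) (hM : M.IsSymm)
    (hgenLap : ∀ i j : Fin n, i ≠ j → (G.Adj i j → M i j < 0) ∧ (¬G.Adj i j → M i j = 0))
    (μ : Fin n → ℝ) (hmono : Monotone μ)
    (hchar : M.charpoly = ∏ i, (Polynomial.X - Polynomial.C (μ i)))
    (f : Fin n → ℝ) (hf : f ≠ 0)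
    (heig : M.mulVec f = μ ⟨n - 1, by omega⟩ • f) :
    Nat.card {i : Fin n | μ i = μ ⟨n - 1, by omega⟩} = 1 ∧
    numWeak G (fun _ _ => (1 : ℝ)) f = n ∧ numStrong G (fun _ _ => (1 : ℝ)) f = n := by
  classical
  set lam : ℝ := μ ⟨n - 1, by omega⟩ with hlam
  -- coloring and signs
  obtain ⟨Cc⟩ := hbip
  set s : Fin n → ℝ := fun i => if Cc i = 0 then 1 else -1 with hs
  have hs2 : ∀ i, s i * s i = 1 := by
    intro i; by_cases h : Cc i = 0 <;> simp [hs, h]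
  have hsne : ∀ i, s i ≠ 0 := by
    intro i; by_cases h : Cc i = 0 <;> simp [hs, h]
  have htwo : ∀ a : Fin 2, a = 0 ∨ a = 1 := by decide
  have hsadj : ∀ i j, G.Adj i j → s i * s j = -1 := by
    intro i j hadj
    have hne : Cc i ≠ Cc j := Cc.valid hadj
    rcases htwo (Cc i) with h1 | h1 <;> rcases htwo (Cc j) with h2 | h2 <;>
      first
      | (exact absurd (h1.trans h2.symm) hne)
      | (simp [hs, h1, h2])
  -- the conjugated matrix
  set N : Matrix (Fin n) (Fin n) ℝ := Matrix.of fun i j => s i * M i j * s j with hNdef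
  have hMsymm : ∀ i j, M j i = M i j := by
    intro i j
    have := congrFun (congrFun hM i) j
    simpa [Matrix.transpose_apply] using this
  have hNherm : N.IsHermitian := by
    rw [Matrix.IsHermitian, conjTranspose_eq_transpose_of_trivial]
    ext i j
    simp only [Matrix.transpose_apply, hNdef, Matrix.of_apply]
    rw [hMsymm i j]; ring
  have hNpos : ∀ i j, G.Adj i j → 0 < N i j := by
    intro i j hadj
    have hMn := (hgenLap i j (G.ne_of_adj hadj)).1 hadj
    have h1 : N i j = s i * s j * M i j := by
      simp only [hNdef, Matrix.of_apply]; ring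
    rw [h1, hsadj i j hadj]; linarith
  have hNzero : ∀ i j, i ≠ j → ¬ G.Adj i j → N i j = 0 := by
    intro i j hne hnadj
    have := (hgenLap i j hne).2 hnadj
    simp [hNdef, this]
  have hNform : N = Matrix.diagonal s * M * Matrix.diagonal s := by
    ext i j
    rw [Matrix.mul_diagonal, Matrix.diagonal_mul]
    simp only [hNdef, Matrix.of_apply]
  have hdd : Matrix.diagonal s * Matrix.diagonal s = 1 := by
    rw [Matrix.diagonal_mul_diagonal]
    have h1 : (fun i => s i * s i) = fun _ => (1:ℝ) := funext hs2
    rw [h1, Matrix.diagonal_one]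
  have hcharN : N.charpoly = ∏ i, (X - C (μ i)) := by
    rw [hNform, charpoly_conj M _ _ hdd, hchar]
  have hmeq : Finset.univ.val.map μ = Finset.univ.val.map hNherm.eigenvalues :=
    multiset_map_eq (by rw [← hcharN, charpoly_hermitian hNherm])
  have hevle : ∀ i, hNherm.eigenvalues i ≤ lam := by
    intro i
    have hmem : hNherm.eigenvalues i ∈ Finset.univ.val.map hNherm.eigenvalues :=
      Multiset.mem_map.mpr ⟨i, Finset.mem_univ i, rfl⟩
    rw [← hmeq] at hmem
    obtain ⟨j, -, hj⟩ := Multiset.mem_map.mp hmem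
    rw [← hj, hlam]
    exact hmono (by rw [Fin.le_def]; simp; omega)
  -- eigenvector of N
  set g : Fin n → ℝ := fun i => s i * f i with hg
  have hgeig : N *ᵥ g = lam • g := by
    funext i
    have hMf := congrFun heig i
    simp only [Matrix.mulVec, dotProduct, Pi.smul_apply, smul_eq_mul] at hMf ⊢
    simp only [hNdef, hg, Matrix.of_apply]
    calc ∑ j, s i * M i j * s j * (s j * f j) = s i * ∑ j, M i j * f j := by
          rw [Finset.mul_sum]
          refine Finset.sum_congr rfl fun j _ => ?_
          calc s i * M i j * s j * (s j * f j)
              = s i * (M i j * f j) * (s j * s j) := by ring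
            _ = s i * (M i j * f j) := by rw [hs2 j, mul_one]
      _ = s i * (lam * f i) := by rw [hMf]
      _ = lam * (s i * f i) := by ring
  have hgne : g ≠ 0 := by
    intro h
    apply hf
    funext i
    have h1 := congrFun h i
    simp only [hg, Pi.zero_apply] at h1
    rcases mul_eq_zero.mp h1 with h2 | h2
    · exact absurd h2 (hsne i)
    · exact h2
  obtain ⟨hgnz, hgpos⟩ := top_eigenvector hNherm hevle hNpos hNzero hconn g hgne hgeig
  have hfnz : ∀ x, f x ≠ 0 := by
    intro x hx
    exact hgnz x (by simp [hg, hx])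
  have hfneg : ∀ x y, G.Adj x y → f x * f y < 0 := by
    intro x y hadj
    have h1 := hgpos x y hadj
    have h2 : g x * g y = (s x * s y) * (f x * f y) := by simp only [hg]; ring
    rw [h2, hsadj x y hadj] at h1
    linarith
  refine ⟨?_, ?_, ?_⟩
  · -- simplicity
    have huniq := eigen_unique hn hNherm hevle hNpos hNzero hconn
    have hexist : ∃ i, hNherm.eigenvalues i = lam := by
      have hmem : lam ∈ Finset.univ.val.map μ :=
        Multiset.mem_map.mpr ⟨⟨n - 1, by omega⟩, Finset.mem_univ_val _, rfl⟩
      rw [hmeq] at hmem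
      obtain ⟨i, -, hi⟩ := Multiset.mem_map.mp hmem
      exact ⟨i, hi⟩
    obtain ⟨i0, hi0⟩ := hexist
    have hcount : ∀ h : Fin n → ℝ, (Finset.univ.filter fun i => h i = lam).card
        = Multiset.count lam (Finset.univ.val.map h) := by
      intro h
      rw [Finset.card_def, Finset.filter_val, Multiset.count_map]
      exact congrArg Multiset.card (Multiset.filter_congr (fun x _ => eq_comm)).symm
    have hone : (Finset.univ.filter fun i => hNherm.eigenvalues i = lam).card = 1 := by
      rw [Finset.card_eq_one]
      refine ⟨i0, ?_⟩
      ext j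
      simp only [Finset.mem_filter, Finset.mem_univ, true_and, Finset.mem_singleton]
      exact ⟨fun hj => huniq j i0 hj hi0, fun hj => hj ▸ hi0⟩
    have hcard : Nat.card {i : Fin n | μ i = lam} = 1 := by
      rw [Nat.card_eq_fintype_card]
      have : Fintype.card {i : Fin n | μ i = lam}
          = (Finset.univ.filter fun i => μ i = lam).card := Fintype.card_subtype _
      rw [this, hcount μ, hmeq, ← hcount hNherm.eigenvalues, hone]
    exact hcard
  · rw [numWeak_eq hfneg hfnz, Nat.card_eq_fintype_card, Fintype.card_fin]
  · rw [numStrong_eq hfneg hfnz, Nat.card_eq_fintype_card, Fintype.card_fin]
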